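/- For p = 2, the Hardy–Hodge decomposition f = f⁺ + f⁻ + f⁰ of a para-vector valued f ∈ L²(ℝ^n, Cl(n,ℝ)) satisfies the Pythagorean identity ‖f‖² = ‖f⁺‖² + ‖f⁻‖² + ‖f⁰‖². -/
import Mathlib


open MeasureTheory
open scoped RealInnerProductSpace

/-- **Pythagorean identity for the Hardy–Hodge decomposition in `L²`.**
If `f = f⁺ + f⁻ + f⁰` is the Hardy–Hodge decomposition of a para-vector valued
`f ∈ L²(ℝⁿ, Cl(n,ℝ))` — written in components as `f_0 = φ⁺ + φ⁻`,
`f_k = -R_k φ⁺ + R_k φ⁻ + f⁰_k` with `Σ_k R_k f⁰_k = 0`, where `f⁺ = (I+H)φ⁺` and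
`f⁻ = (I−H)φ⁻` are boundary values of Hardy functions of the upper and lower
half-spaces — then `‖f‖² = ‖f⁺‖² + ‖f⁻‖² + ‖f⁰‖²`.  The Riesz transforms `R_k`
are commuting bounded operators on `L²` which are skew-adjoint and satisfy
`Σ_k R_k² = -I`. -/
theorem hardy_hodge_pythagoras (n : ℕ) (hn : 1 ≤ n)
    (R : Fin n →
      (Lp ℝ 2 (volume : Measure (Fin n → ℝ))) →L[ℝ]
        (Lp ℝ 2 (volume : Measure (Fin n → ℝ))))
    (hcomm : ∀ j k : Fin n, ∀ g, R j (R k g) = R k (R j g))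
    (hsq : ∀ g, ∑ k : Fin n, R k (R k g) = -g)
    (hskew : ∀ (k : Fin n) (g h : Lp ℝ 2 (volume : Measure (Fin n → ℝ))),
      ⟪R k g, h⟫ = -⟪g, R k h⟫)
    (f0 : Lp ℝ 2 (volume : Measure (Fin n → ℝ)))
    (fv : Fin n → Lp ℝ 2 (volume : Measure (Fin n → ℝ)))
    (φp φm : Lp ℝ 2 (volume : Measure (Fin n → ℝ)))
    (g : Fin n → Lp ℝ 2 (volume : Measure (Fin n → ℝ)))
    (hdiv : ∑ k : Fin n, R k (g k) = 0)
    (h0 : f0 = φp + φm)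
    (hv : ∀ k : Fin n, fv k = -(R k φp) + R k φm + g k) :
    ‖f0‖ ^ 2 + ∑ k : Fin n, ‖fv k‖ ^ 2 =
      (‖φp‖ ^ 2 + ∑ k : Fin n, ‖R k φp‖ ^ 2) +
      (‖φm‖ ^ 2 + ∑ k : Fin n, ‖R k φm‖ ^ 2) +
      ∑ k : Fin n, ‖g k‖ ^ 2 := by

  have key1 : ∑ k : Fin n, ⟪R k φp, R k φm⟫ = ⟪φp, φm⟫ := by
    have h1 : ∀ k : Fin n, ⟪R k φp, R k φm⟫ = -⟪φp, R k (R k φm)⟫ :=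
      fun k => hskew k _ _
    calc ∑ k : Fin n, ⟪R k φp, R k φm⟫
        = ∑ k : Fin n, -⟪φp, R k (R k φm)⟫ := Finset.sum_congr rfl (fun k _ => h1 k)
      _ = -⟪φp, ∑ k : Fin n, R k (R k φm)⟫ := by rw [Finset.sum_neg_distrib, inner_sum]
      _ = ⟪φp, φm⟫ := by rw [hsq, inner_neg_right, neg_neg]
  have key2 : ∀ φ : Lp ℝ 2 (volume : Measure (Fin n → ℝ)),
      ∑ k : Fin n, ⟪R k φ, g k⟫ = 0 := by
    intro φ
    have h1 : ∀ k : Fin n, ⟪R k φ, g k⟫ = -⟪φ, R k (g k)⟫ := fun k => hskew k _ _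
    calc ∑ k : Fin n, ⟪R k φ, g k⟫
        = ∑ k : Fin n, -⟪φ, R k (g k)⟫ := Finset.sum_congr rfl (fun k _ => h1 k)
      _ = -⟪φ, ∑ k : Fin n, R k (g k)⟫ := by rw [Finset.sum_neg_distrib, inner_sum]
      _ = 0 := by rw [hdiv, inner_zero_right, neg_zero]
  have hf0 : ‖f0‖ ^ 2 = ‖φp‖ ^ 2 + 2 * ⟪φp, φm⟫ + ‖φm‖ ^ 2 := by
    rw [h0, @norm_add_sq_real]
  have hfv : ∀ k : Fin n, ‖fv k‖ ^ 2 =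
      ‖R k φp‖ ^ 2 + ‖R k φm‖ ^ 2 + ‖g k‖ ^ 2
        - 2 * ⟪R k φp, R k φm⟫ - 2 * ⟪R k φp, g k⟫ + 2 * ⟪R k φm, g k⟫ := by
    intro k
    rw [hv k, @norm_add_sq_real, @norm_add_sq_real, inner_add_left,
      inner_neg_left, inner_neg_left, norm_neg]
    ring
  rw [hf0]
  have hsum : ∑ k : Fin n, ‖fv k‖ ^ 2 =
      ∑ k : Fin n, ‖R k φp‖ ^ 2 + ∑ k : Fin n, ‖R k φm‖ ^ 2 + ∑ k : Fin n, ‖g k‖ ^ 2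
        - 2 * ⟪φp, φm⟫ := by
    rw [Finset.sum_congr rfl (fun k _ => hfv k)]
    simp only [Finset.sum_add_distrib, Finset.sum_sub_distrib, ← Finset.mul_sum,
      key1, key2 φp, key2 φm]
    ring
  rw [hsum]; ring
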